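/- Fix s > 0 and define the tent pair-interaction force g_s : ℝ → ℝ by g_s(d) = s·sign(d) if 0 < |d| < 1/2, g_s(d) = −s·sign(d) if 1/2 < |d| ≤ 1, and g_s(0) = 0; define the tent opinion vector field on ℝ³ by F(o)ᵢ = Σ_{j≠i} g_s(o_j − o_i). Let R₁ = {(o₁,o₂,o₃) ∈ ℝ³ : 0 < o₂−o₁ < 1/2, 0 < o₃−o₂ < 1/2, 1/2 < o₃−o₁ < 1}. Then R₁ is a nonempty open subset of ℝ³, R₁ is disjoint from the consensus diagonal {o₁ = o₂ = o₃} and contains no point of {0,1}³, and F(o) = 0 for every o ∈ R₁. -/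

import Mathlib

open Finset in
/-- The tent pair-interaction force: attraction of magnitude `s` for opinion
differences below `1/2`, repulsion above `1/2`, zero at equal opinions. -/
noncomputable def tentForce (s d : ℝ) : ℝ :=
  if 0 < |d| ∧ |d| < 1/2 then s * Real.sign d
  else if 1/2 < |d| ∧ |d| ≤ 1 then -(s * Real.sign d)
  else 0

open Finset in
/-- The tent opinion vector field on `ℝ³` for three fully connected agents. -/
noncomputable def tentField (s : ℝ) (o : Fin 3 → ℝ) : Fin 3 → ℝ :=
  fun i => ∑ j ∈ Finset.univ.erase i, tentForce s (o j - o i)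

/-- The region `R₁` corresponding to the ordering `o₁ < o₂ < o₃` with both
consecutive gaps less than `1/2` and the outer gap in `(1/2, 1)`. -/
def R1 : Set (Fin 3 → ℝ) :=
  {o | 0 < o 1 - o 0 ∧ o 1 - o 0 < 1/2 ∧
       0 < o 2 - o 1 ∧ o 2 - o 1 < 1/2 ∧
       1/2 < o 2 - o 0 ∧ o 2 - o 0 < 1}

lemma tentForce_pos_small {s d : ℝ} (h0 : 0 < d) (h1 : d < 1/2) :
    tentForce s d = s := by
  rw [tentForce, if_pos ⟨by rw [abs_of_pos h0]; exact h0, by rw [abs_of_pos h0]; exact h1⟩,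
    Real.sign_of_pos h0, mul_one]

lemma tentForce_pos_big {s d : ℝ} (h0 : 1/2 < d) (h1 : d ≤ 1) :
    tentForce s d = -s := by
  have hd : 0 < d := by linarith
  rw [tentForce, if_neg (by rw [abs_of_pos hd]; intro h; linarith [h.2]),
    if_pos ⟨by rw [abs_of_pos hd]; exact h0, by rw [abs_of_pos hd]; exact h1⟩,
    Real.sign_of_pos hd, mul_one]

lemma tentForce_neg_small {s d : ℝ} (h0 : -(1/2) < d) (h1 : d < 0) :
    tentForce s d = -s := by
  rw [tentForce, if_pos ⟨by rw [abs_of_neg h1]; linarith, by rw [abs_of_neg h1]; linarith⟩,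
    Real.sign_of_neg h1, mul_neg_one]

lemma tentForce_neg_big {s d : ℝ} (h0 : -1 ≤ d) (h1 : d < -(1/2)) :
    tentForce s d = s := by
  have hd : d < 0 := by linarith
  rw [tentForce, if_neg (by rw [abs_of_neg hd]; intro h; linarith [h.2]),
    if_pos ⟨by rw [abs_of_neg hd]; linarith, by rw [abs_of_neg hd]; linarith⟩,
    Real.sign_of_neg hd, mul_neg_one, neg_neg]

/-- Theorem (fixedPointRegion): `R₁` is a nonempty open set, disjoint from the
consensus diagonal and from the polarization states `{0,1}³`, consisting
entirely of fixed points of the tent opinion vector field. -/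
theorem tent_fixed_point_region (s : ℝ) (hs : 0 < s) :
    R1.Nonempty ∧ IsOpen R1 ∧
    (∀ o ∈ R1, ¬ (o 0 = o 1 ∧ o 1 = o 2)) ∧
    (∀ o ∈ R1, ¬ (∀ i : Fin 3, o i = 0 ∨ o i = 1)) ∧
    (∀ o ∈ R1, tentField s o = 0) := by
  refine ⟨⟨![0, 3/10, 6/10], by norm_num [R1, Matrix.cons_val_two, Matrix.tail_cons, Matrix.head_cons]⟩, ?_, ?_, ?_, ?_⟩
  · have hc : ∀ i j : Fin 3, Continuous fun o : Fin 3 → ℝ => o i - o j :=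
      fun i j => (continuous_apply i).sub (continuous_apply j)
    have : R1 = ((fun o : Fin 3 → ℝ => o 1 - o 0) ⁻¹' Set.Ioi 0) ∩
        ((fun o : Fin 3 → ℝ => o 1 - o 0) ⁻¹' Set.Iio (1/2)) ∩
        ((fun o : Fin 3 → ℝ => o 2 - o 1) ⁻¹' Set.Ioi 0) ∩
        ((fun o : Fin 3 → ℝ => o 2 - o 1) ⁻¹' Set.Iio (1/2)) ∩
        ((fun o : Fin 3 → ℝ => o 2 - o 0) ⁻¹' Set.Ioi (1/2)) ∩
        ((fun o : Fin 3 → ℝ => o 2 - o 0) ⁻¹' Set.Iio 1) := by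
      ext o
      simp [R1, Set.mem_setOf_eq, and_assoc]
    rw [this]
    exact ((((((hc 1 0).isOpen_preimage _ isOpen_Ioi).inter
      ((hc 1 0).isOpen_preimage _ isOpen_Iio)).inter
      ((hc 2 1).isOpen_preimage _ isOpen_Ioi)).inter
      ((hc 2 1).isOpen_preimage _ isOpen_Iio)).inter
      ((hc 2 0).isOpen_preimage _ isOpen_Ioi)).inter
      ((hc 2 0).isOpen_preimage _ isOpen_Iio)
  · rintro o ⟨h1, _⟩ ⟨h01, _⟩
    rw [h01] at h1; linarith
  · rintro o ⟨h1, h2, _⟩ hpol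
    rcases hpol 0 with h0 | h0 <;> rcases hpol 1 with h1' | h1' <;>
      rw [h0, h1'] at h1 h2 <;> linarith
  · rintro o ⟨h1, h2, h3, h4, h5, h6⟩
    funext i
    have e0 : (Finset.univ.erase (0 : Fin 3)) = {1, 2} := by decide
    have e1 : (Finset.univ.erase (1 : Fin 3)) = {0, 2} := by decide
    have e2 : (Finset.univ.erase (2 : Fin 3)) = {0, 1} := by decide
    fin_cases i
    · show ∑ j ∈ Finset.univ.erase (0 : Fin 3), tentForce s (o j - o 0) = 0
      rw [e0, Finset.sum_pair (by decide),
        tentForce_pos_small h1 h2, tentForce_pos_big h5 (le_of_lt h6)]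
      ring
    · show ∑ j ∈ Finset.univ.erase (1 : Fin 3), tentForce s (o j - o 1) = 0
      rw [e1, Finset.sum_pair (by decide),
        tentForce_neg_small (by linarith) (by linarith),
        tentForce_pos_small h3 h4]
      ring
    · show ∑ j ∈ Finset.univ.erase (2 : Fin 3), tentForce s (o j - o 2) = 0
      rw [e2, Finset.sum_pair (by decide),
        tentForce_neg_big (by linarith) (by linarith),
        tentForce_neg_small (by linarith) (by linarith)]
      ring
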